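/- arXiv:2408.06160 — 3 statements merged into one kernel-verified Lean document; each statement's English description precedes it below -/
import Mathlib

section
/- Let n ≥ 1 and let P₁, …, P_m be Pauli words on n qubits, each of the stabilizer-rotation form P(A_k, j_k) (Pauli Z on every qubit in a finite set A_k ⊆ {1,…,n}, Pauli Y on a single qubit j_k ∉ A_k, identity elsewhere; A_k may be empty). Let U = ∏_{k=1}^{m} exp(i(π/2)P_k), the product of the matrix exponentials in a fixed order. Then there exist a permutation σ of the set of bit strings {0,1}^n and complex numbers φ_b with |φ_b| = 1 such that for every bit string b, U e_b = φ_b · e_{σ(b)}, where e_b denotes the computational basis vector indexed by b. In other words, U maps computational basis states bijectively to computational basis states, changing amplitudes by at most a phase. -/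
open Matrix Complex Real

/-- The single-qubit identity matrix. -/
noncomputable def PauliI : Matrix (Fin 2) (Fin 2) ℂ := !![1, 0; 0, 1]

/-- The single-qubit Pauli X matrix. -/
noncomputable def PauliX : Matrix (Fin 2) (Fin 2) ℂ := !![0, 1; 1, 0]

/-- The single-qubit Pauli Y matrix. -/
noncomputable def PauliY : Matrix (Fin 2) (Fin 2) ℂ := !![0, -Complex.I; Complex.I, 0]

/-- The single-qubit Pauli Z matrix. -/
noncomputable def PauliZ : Matrix (Fin 2) (Fin 2) ℂ := !![1, 0; 0, -1]

/-- The Pauli word `W(p)`: the `n`-fold Kronecker/tensor product of the single-qubit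
matrices `p i`, i.e. the `2^n × 2^n` matrix with entries `W(p)(a,b) = ∏ i, p i (a i) (b i)`. -/
noncomputable def PauliWord (n : ℕ) (p : Fin n → Matrix (Fin 2) (Fin 2) ℂ) :
    Matrix (Fin n → Fin 2) (Fin n → Fin 2) ℂ :=
  Matrix.of fun a b => ∏ i, p i (a i) (b i)

/-- The stabilizer-rotation Pauli word `P(A, j)`: Pauli Z on every qubit of `A`,
Pauli Y on qubit `j`, and identity elsewhere. -/
noncomputable def stabRot (n : ℕ) (A : Finset (Fin n)) (j : Fin n) :
    Matrix (Fin n → Fin 2) (Fin n → Fin 2) ℂ :=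
  PauliWord n fun i => if i = j then PauliY else if i ∈ A then PauliZ else PauliI

/-- The computational basis vector `e_b` indexed by the bit string `b`. -/
noncomputable def basisVec (n : ℕ) (b : Fin n → Fin 2) : (Fin n → Fin 2) → ℂ :=
  fun a => if a = b then 1 else 0

-- general Banach algebra lemma
theorem exp_smul_of_sq_eq_one {𝔸 : Type*} [NormedRing 𝔸] [NormedAlgebra ℂ 𝔸]
    [CompleteSpace 𝔸] (a : 𝔸) (h : a * a = 1) (c : ℂ) :
    NormedSpace.exp (c • a) = Complex.cosh c • (1 : 𝔸) + Complex.sinh c • a := by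
  have hpow : ∀ k : ℕ, a ^ (2 * k) = 1 := by
    intro k
    rw [pow_mul, pow_two, h, one_pow]
  have hpow' : ∀ k : ℕ, a ^ (2 * k + 1) = a := by
    intro k
    rw [pow_succ, hpow, one_mul]
  have key : ∀ nn : ℕ, ((Nat.factorial nn : ℂ))⁻¹ • (c • a) ^ nn = (c ^ nn / Nat.factorial nn) • (a ^ nn) := by
    intro nn; rw [smul_pow, smul_smul, div_eq_mul_inv, mul_comm]
  rw [NormedSpace.exp_eq_tsum ℂ]
  refine HasSum.tsum_eq ?_
  refine HasSum.even_add_odd ?_ ?_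
  · have := (Complex.hasSum_cosh c).smul_const (1 : 𝔸)
    convert this using 2 with k
    rw [key, hpow]
  · have := (Complex.hasSum_sinh c).smul_const a
    convert this using 2 with k
    rw [key, hpow']

theorem PauliWord_mul (n : ℕ) (p q : Fin n → Matrix (Fin 2) (Fin 2) ℂ) :
    PauliWord n p * PauliWord n q = PauliWord n (fun i => p i * q i) := by
  ext a c
  simp only [PauliWord, Matrix.mul_apply, Matrix.of_apply, ← Finset.prod_mul_distrib]
  rw [Finset.prod_univ_sum, Fintype.piFinset_univ]

theorem PauliI_eq_one : PauliI = 1 := by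
  ext i k; fin_cases i <;> fin_cases k <;> simp [PauliI]

theorem PauliWord_one (n : ℕ) : PauliWord n (fun _ => PauliI) = 1 := by
  ext a b
  simp only [PauliWord, Matrix.of_apply, PauliI_eq_one, Matrix.one_apply]
  rw [Finset.prod_boole]
  simp [funext_iff]

theorem mulY : PauliY * PauliY = PauliI := by
  rw [PauliY, PauliI, Matrix.mul_fin_two]; norm_num

theorem mulZ : PauliZ * PauliZ = PauliI := by
  rw [PauliZ, PauliI, Matrix.mul_fin_two]; norm_num

theorem mulI : PauliI * PauliI = PauliI := by
  rw [PauliI, Matrix.mul_fin_two]; norm_num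

theorem stabRot_sq (n : ℕ) (A : Finset (Fin n)) (j : Fin n) :
    stabRot n A j * stabRot n A j = 1 := by
  rw [stabRot, PauliWord_mul]
  have hfac : (fun i => (if i = j then PauliY else if i ∈ A then PauliZ else PauliI) *
      (if i = j then PauliY else if i ∈ A then PauliZ else PauliI)) = fun _ : Fin n => PauliI := by
    funext i
    by_cases hij : i = j
    · simp [hij, mulY]
    · by_cases hA : i ∈ A <;> simp [hij, hA, mulZ, mulI]
  rw [hfac, PauliWord_one]

/-- bit-flip at position `j` -/
def flipBit {n : ℕ} (j : Fin n) (b : Fin n → Fin 2) : Fin n → Fin 2 :=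
  Function.update b j (1 - b j)

theorem flipBit_invol {n : ℕ} (j : Fin n) : Function.Involutive (flipBit j) := by
  intro b
  funext i
  by_cases hij : i = j
  · subst hij
    simp only [flipBit, Function.update_self]
    have : ∀ x : Fin 2, 1 - (1 - x) = x := by decide
    exact this (b i)
  · simp [flipBit, Function.update_of_ne hij]

noncomputable def phase {n : ℕ} (A : Finset (Fin n)) (j : Fin n) (b : Fin n → Fin 2) : ℂ :=
  ∏ i, (if i = j then PauliY else if i ∈ A then PauliZ else PauliI) (flipBit j b i) (b i)

theorem stabRot_apply {n : ℕ} (A : Finset (Fin n)) (j : Fin n) (a b : Fin n → Fin 2) :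
    stabRot n A j a b = if a = flipBit j b then phase A j b else 0 := by
  by_cases h : a = flipBit j b
  · rw [if_pos h, h]; rfl
  · rw [if_neg h]
    obtain ⟨i, hi⟩ := Function.ne_iff.mp h
    refine Finset.prod_eq_zero (Finset.mem_univ i) ?_
    dsimp only
    by_cases hij : i = j
    · subst hij
      have hb : a i = b i := by
        have hne : a i ≠ 1 - b i := by simpa [flipBit] using hi
        revert hne
        have : ∀ x y : Fin 2, x ≠ 1 - y → x = y := by decide
        exact this (a i) (b i)
      rw [if_pos rfl, hb]
      have : ∀ y : Fin 2, PauliY y y = 0 := by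
        intro y; fin_cases y <;> simp [PauliY]
      exact this (b i)
    · have hne : a i ≠ b i := by simpa [flipBit, Function.update_of_ne hij] using hi
      rw [if_neg hij]
      by_cases hA : i ∈ A
      · rw [if_pos hA]
        revert hne
        have : ∀ x y : Fin 2, x ≠ y → PauliZ x y = 0 := by
          intro x y hxy; fin_cases x <;> fin_cases y <;> simp_all [PauliZ]
        exact this _ _
      · rw [if_neg hA]
        revert hne
        have : ∀ x y : Fin 2, x ≠ y → PauliI x y = 0 := by
          intro x y hxy; fin_cases x <;> fin_cases y <;> simp_all [PauliI]
        exact this _ _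

theorem abs_phase {n : ℕ} (A : Finset (Fin n)) (j : Fin n) (b : Fin n → Fin 2) :
    ‖phase A j b‖ = 1 := by
  rw [phase, norm_prod]
  refine Finset.prod_eq_one fun i _ => ?_
  by_cases hij : i = j
  · subst hij
    rw [if_pos rfl]
    have hfb : flipBit i b i = 1 - b i := Function.update_self _ _ _
    rw [hfb]
    have : ∀ y : Fin 2, ‖PauliY (1 - y) y‖ = 1 := by
      intro y; fin_cases y <;> simp [PauliY]
    exact this (b i)
  · rw [if_neg hij]
    have hfb : flipBit j b i = b i := Function.update_of_ne hij _ _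
    rw [hfb]
    by_cases hA : i ∈ A
    · rw [if_pos hA]
      have : ∀ y : Fin 2, ‖PauliZ y y‖ = 1 := by
        intro y; fin_cases y <;> simp [PauliZ]
      exact this (b i)
    · rw [if_neg hA]
      have : ∀ y : Fin 2, ‖PauliI y y‖ = 1 := by
        intro y; fin_cases y <;> simp [PauliI]
      exact this (b i)

def GoodM (n : ℕ) (U : Matrix (Fin n → Fin 2) (Fin n → Fin 2) ℂ) : Prop :=
  ∃ (σ : Equiv.Perm (Fin n → Fin 2)) (φ : (Fin n → Fin 2) → ℂ),
    (∀ b, ‖φ b‖ = 1) ∧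
    ∀ b, U.mulVec (basisVec n b) = φ b • basisVec n (σ b)

theorem mulVec_basisVec {n : ℕ} (U : Matrix (Fin n → Fin 2) (Fin n → Fin 2) ℂ)
    (b : Fin n → Fin 2) : U.mulVec (basisVec n b) = fun a => U a b := by
  funext a
  simp [Matrix.mulVec, basisVec, dotProduct, mul_ite, mul_one, mul_zero]

theorem good_one (n : ℕ) : GoodM n 1 := by
  refine ⟨Equiv.refl _, fun _ => 1, fun b => by simp, fun b => by simp [Matrix.one_mulVec]⟩

theorem good_mul {n : ℕ} {U V : Matrix (Fin n → Fin 2) (Fin n → Fin 2) ℂ}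
    (hU : GoodM n U) (hV : GoodM n V) : GoodM n (U * V) := by
  obtain ⟨σU, φU, hφU, hU⟩ := hU
  obtain ⟨σV, φV, hφV, hV⟩ := hV
  refine ⟨σV.trans σU, fun b => φU (σV b) * φV b, fun b => by
    rw [norm_mul, hφU, hφV, one_mul], fun b => ?_⟩
  rw [← Matrix.mulVec_mulVec, hV b, Matrix.mulVec_smul, hU (σV b), smul_smul, mul_comm]
  rfl

theorem good_prod {n : ℕ} (L : List (Matrix (Fin n → Fin 2) (Fin n → Fin 2) ℂ))
    (h : ∀ X ∈ L, GoodM n X) : GoodM n L.prod := by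
  induction L with
  | nil => simpa using good_one n
  | cons X L ih =>
    rw [List.prod_cons]
    exact good_mul (h X (List.mem_cons_self)) (ih fun Y hY => h Y (List.mem_cons_of_mem X hY))

theorem exp_stabRot (n : ℕ) (A : Finset (Fin n)) (j : Fin n) :
    NormedSpace.exp (((Real.pi / 2 : ℂ) * Complex.I) • stabRot n A j) =
      Complex.I • stabRot n A j := by
  letI : SeminormedRing (Matrix (Fin n → Fin 2) (Fin n → Fin 2) ℂ) := Matrix.linftyOpSemiNormedRing
  letI : NormedRing (Matrix (Fin n → Fin 2) (Fin n → Fin 2) ℂ) := Matrix.linftyOpNormedRing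
  letI : NormedAlgebra ℂ (Matrix (Fin n → Fin 2) (Fin n → Fin 2) ℂ) := Matrix.linftyOpNormedAlgebra
  erw [exp_smul_of_sq_eq_one _ (stabRot_sq n A j)]
  have hc : ((Real.pi / 2 : ℂ)) = ((Real.pi / 2 : ℝ) : ℂ) := by push_cast; ring
  have h1 : Complex.cosh ((Real.pi / 2 : ℂ) * Complex.I) = 0 := by
    rw [Complex.cosh_mul_I, hc, ← Complex.ofReal_cos, Real.cos_pi_div_two, Complex.ofReal_zero]
  have h2 : Complex.sinh ((Real.pi / 2 : ℂ) * Complex.I) = Complex.I := by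
    rw [Complex.sinh_mul_I, hc, ← Complex.ofReal_sin, Real.sin_pi_div_two, Complex.ofReal_one,
      one_mul]
  rw [h1, h2, zero_smul, zero_add]

theorem good_exp_stabRot (n : ℕ) (A : Finset (Fin n)) (j : Fin n) :
    GoodM n (NormedSpace.exp (((Real.pi / 2 : ℂ) * Complex.I) • stabRot n A j)) := by
  rw [exp_stabRot]
  refine ⟨Function.Involutive.toPerm _ (flipBit_invol j),
    fun b => Complex.I * phase A j b, fun b => by
      rw [norm_mul, Complex.norm_I, abs_phase, one_mul], fun b => ?_⟩
  rw [Matrix.smul_mulVec, mulVec_basisVec]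
  have : (fun a => stabRot n A j a b) = phase A j b • basisVec n (flipBit j b) := by
    funext a
    rw [stabRot_apply]
    by_cases h : a = flipBit j b <;> simp [h, basisVec]
  rw [this, smul_smul]
  rfl


/-- A product of `π/2` rotations generated by stabilizer-rotation Pauli words
maps computational basis states bijectively to computational basis states, up to phases. -/
theorem product_of_stabilizer_rotations_permutes_basis_up_to_phase
    (n : ℕ) (hn : 1 ≤ n) (m : ℕ)
    (A : Fin m → Finset (Fin n)) (j : Fin m → Fin n) (hAj : ∀ k, j k ∉ A k) :
    ∃ (σ : Equiv.Perm (Fin n → Fin 2)) (φ : (Fin n → Fin 2) → ℂ),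
      (∀ b, ‖φ b‖ = 1) ∧
      ∀ b : Fin n → Fin 2,
        (((List.finRange m).map fun k =>
            NormedSpace.exp (((Real.pi / 2 : ℂ) * Complex.I) • stabRot n (A k) (j k))).prod).mulVec
          (basisVec n b) = φ b • basisVec n (σ b) := by
  have h := good_prod ((List.finRange m).map fun k =>
      NormedSpace.exp (((Real.pi / 2 : ℂ) * Complex.I) • stabRot n (A k) (j k))) ?_
  · obtain ⟨σ, φ, h1, h2⟩ := h
    exact ⟨σ, φ, h1, h2⟩
  · intro X hX
    obtain ⟨k, -, rfl⟩ := List.mem_map.mp hX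
    exact good_exp_stabRot n (A k) (j k)
end

section
/- Let H be a Hermitian d×d complex matrix, let E₀ be its smallest eigenvalue with unit eigenvector ψ₀ spanning the (one-dimensional) E₀-eigenspace, and let ψ_I ∈ ℂ^d satisfy ⟨ψ₀, ψ_I⟩ ≠ 0. Then the imaginary-time energy estimator converges to the ground-state energy: lim_{t→∞} ⟨ψ_I, H exp(−2tH) ψ_I⟩ / ⟨ψ_I, exp(−2tH) ψ_I⟩ = E₀, where the denominator is a strictly positive real number for every t. -/
open Matrix

/-- The imaginary-time energy estimator
`⟨ψ_I, H e^{-2tH} ψ_I⟩ / ⟨ψ_I, e^{-2tH} ψ_I⟩` converges to the ground-state energy `E₀`,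
and the denominator is a strictly positive real number for every `t`. -/
theorem imaginary_time_energy_estimator_tendsto_ground_energy
    (d : ℕ) (H : Matrix (Fin d) (Fin d) ℂ) (hH : H.IsHermitian)
    (E₀ : ℝ) (ψ₀ ψI : Fin d → ℂ)
    (hEig : H.mulVec ψ₀ = (E₀ : ℂ) • ψ₀)
    (hUnit : star ψ₀ ⬝ᵥ ψ₀ = 1)
    (hMin : ∀ (μ : ℝ) (v : Fin d → ℂ), v ≠ 0 → H.mulVec v = (μ : ℂ) • v → E₀ ≤ μ)
    (hSimple : ∀ v : Fin d → ℂ, H.mulVec v = (E₀ : ℂ) • v → ∃ c : ℂ, v = c • ψ₀)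
    (hOv : star ψ₀ ⬝ᵥ ψI ≠ 0) :
    Filter.Tendsto
      (fun t : ℝ =>
        (star ψI ⬝ᵥ (H * NormedSpace.exp ((-(2 * t) : ℂ) • H)).mulVec ψI) /
          (star ψI ⬝ᵥ (NormedSpace.exp ((-(2 * t) : ℂ) • H)).mulVec ψI))
      Filter.atTop (nhds (E₀ : ℂ)) ∧
    ∀ t : ℝ,
      0 < (star ψI ⬝ᵥ (NormedSpace.exp ((-(2 * t) : ℂ) • H)).mulVec ψI).re ∧
        (star ψI ⬝ᵥ (NormedSpace.exp ((-(2 * t) : ℂ) • H)).mulVec ψI).im = 0 := by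
  classical
  set lam : Fin d → ℝ := hH.eigenvalues with hlamdef
  set U : Matrix (Fin d) (Fin d) ℂ := (hH.eigenvectorUnitary : Matrix (Fin d) (Fin d) ℂ)
    with hUdef
  have hU2 := hH.eigenvectorUnitary.2
  have hU1 : U * star U = 1 := (Matrix.mem_unitaryGroup_iff).mp hU2
  have hU1' : star U * U = 1 := (Matrix.mem_unitaryGroup_iff').mp hU2
  have hspec : H = U * diagonal (fun i => (lam i : ℂ)) * star U := by
    exact hH.spectral_theorem
  -- quadratic form identity
  have hquad : ∀ (f : Fin d → ℝ) (x : Fin d → ℂ),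
      star x ⬝ᵥ (U * diagonal (fun i => (f i : ℂ)) * star U).mulVec x
        = ((∑ i, f i * Complex.normSq (((star U).mulVec x) i) : ℝ) : ℂ) := by
    intro f x
    have h1 : star x ᵥ* U = star ((star U).mulVec x) := by
      rw [star_mulVec, ← Matrix.star_eq_conjTranspose, star_star]
    rw [← mulVec_mulVec, ← mulVec_mulVec, dotProduct_mulVec, h1]
    simp only [dotProduct, Pi.star_apply, mulVec_diagonal]
    push_cast
    refine Finset.sum_congr rfl fun i _ => ?_
    rw [show (star (((star U).mulVec x) i)) * ((f i : ℂ) * (((star U).mulVec x) i))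
        = (f i : ℂ) * ((((star U).mulVec x) i) * (starRingEnd ℂ) (((star U).mulVec x) i)) by
          simp [Complex.star_def]; ring,
      Complex.mul_conj]
  -- the units element
  let Uu : (Matrix (Fin d) (Fin d) ℂ)ˣ := ⟨U, star U, hU1, hU1'⟩
  have hUu : (Uu : Matrix (Fin d) (Fin d) ℂ) = U := rfl
  have hUuinv : ((Uu⁻¹ : (Matrix (Fin d) (Fin d) ℂ)ˣ) : Matrix (Fin d) (Fin d) ℂ) = star U := rfl
  -- exponential formula
  have hexp : ∀ t : ℝ, NormedSpace.exp ((-(2 * t) : ℂ) • H)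
      = U * diagonal (fun i => ((Real.exp (-(2 * t) * lam i) : ℝ) : ℂ)) * star U := by
    intro t
    have h1 : (-(2 * t) : ℂ) • H
        = (Uu : Matrix (Fin d) (Fin d) ℂ)
          * diagonal (fun i => (-(2 * t) : ℂ) * (lam i : ℂ))
          * ((Uu⁻¹ : (Matrix (Fin d) (Fin d) ℂ)ˣ) : Matrix (Fin d) (Fin d) ℂ) := by
      rw [hUu, hUuinv]
      conv_lhs => rw [hspec]
      rw [← Matrix.smul_mul, ← Matrix.mul_smul]
      congr 2
      funext i j
      simp [Matrix.diagonal_apply, Matrix.smul_apply]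
    rw [h1, Matrix.exp_units_conj, Matrix.exp_diagonal, Pi.exp_def, hUu, hUuinv]
    have heq : (fun i => NormedSpace.exp ((-(2 * t) : ℂ) * (lam i : ℂ)))
        = fun i => ((Real.exp (-(2 * t) * lam i) : ℝ) : ℂ) := by
      funext i
      rw [Complex.ofReal_exp, Complex.exp_eq_exp_ℂ]
      congr 1
      push_cast
      ring
    rw [heq]
  -- product of conjugated diagonals
  have hmulDiag : ∀ f g : Fin d → ℂ,
      (U * diagonal f * star U) * (U * diagonal g * star U)
        = U * diagonal (fun i => f i * g i) * star U := by
    intro f g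
    calc (U * diagonal f * star U) * (U * diagonal g * star U)
        = U * (diagonal f * ((star U * U) * (diagonal g * star U))) := by
          simp only [Matrix.mul_assoc]
      _ = U * diagonal (fun i => f i * g i) * star U := by
          rw [hU1', Matrix.one_mul, ← Matrix.mul_assoc (diagonal f), diagonal_mul_diagonal,
            ← Matrix.mul_assoc]
  have hHexp : ∀ t : ℝ, H * NormedSpace.exp ((-(2 * t) : ℂ) • H)
      = U * diagonal (fun i => ((lam i * Real.exp (-(2 * t) * lam i) : ℝ) : ℂ)) * star U := by
    intro t
    rw [hexp t]
    conv_lhs => rw [hspec]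
    rw [hmulDiag]
    congr 2
    funext i
    push_cast
    ring
  -- basic eigen-structure facts
  have hpsi0ne : ψ₀ ≠ 0 := by
    intro h
    rw [h] at hUnit
    simp [dotProduct] at hUnit
  have hcol : ∀ i, (fun k => U k i) = ⇑(hH.eigenvectorBasis i) := by
    intro i
    funext k
    simp [hUdef]
  have hcolne : ∀ i, (fun k => U k i) ≠ 0 := by
    intro i h
    rw [hcol i] at h
    exact hH.eigenvectorBasis.orthonormal.ne_zero i (by ext k; exact congrFun h k)
  have hcoleig : ∀ i, H.mulVec (fun k => U k i) = ((lam i : ℝ) : ℂ) • (fun k => U k i) := by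
    intro i
    rw [hcol i, hH.mulVec_eigenvectorBasis i]
    funext k
    simp [Complex.real_smul, hlamdef]
  have hge : ∀ i, E₀ ≤ lam i := fun i => hMin (lam i) _ (hcolne i) (hcoleig i)
  -- a nonzero coefficient of ψ₀
  have ha : (star U).mulVec ψ₀ ≠ 0 := by
    intro h
    apply hpsi0ne
    have h2 : U.mulVec ((star U).mulVec ψ₀) = ψ₀ := by
      rw [mulVec_mulVec, hU1, one_mulVec]
    rw [h, mulVec_zero] at h2
    exact h2.symm
  obtain ⟨i₀, hi₀⟩ := Function.ne_iff.mp ha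
  have hi₀' : ((star U).mulVec ψ₀) i₀ ≠ 0 := by simpa using hi₀
  -- lam i₀ = E₀
  have hdiagstar : star U * H = diagonal (fun i => (lam i : ℂ)) * star U := by
    conv_lhs => rw [hspec]
    simp only [← Matrix.mul_assoc]
    rw [hU1', Matrix.one_mul]
  have hE0i : (lam i₀ : ℂ) = (E₀ : ℂ) := by
    have h1 : (star U * H).mulVec ψ₀ = (diagonal (fun i => (lam i : ℂ)) * star U).mulVec ψ₀ := by
      rw [hdiagstar]
    rw [← mulVec_mulVec, ← mulVec_mulVec, hEig, mulVec_smul] at h1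
    have h2 := congrFun h1 i₀
    simp only [mulVec_diagonal, Pi.smul_apply, smul_eq_mul] at h2
    exact mul_right_cancel₀ hi₀' h2.symm
  have hE0 : lam i₀ = E₀ := by exact_mod_cast hE0i
  -- nonzero overlap coefficient
  obtain ⟨k, hk⟩ := hSimple (fun kk => U kk i₀) (by rw [hcoleig i₀, hE0])
  have hkne : k ≠ 0 := by
    intro h
    apply hcolne i₀
    rw [hk, h, zero_smul]
  have hci0 : ((star U).mulVec ψI) i₀ ≠ 0 := by
    have h1 : ((star U).mulVec ψI) i₀ = star (fun kk => U kk i₀) ⬝ᵥ ψI := by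
      simp [mulVec, dotProduct, Matrix.star_apply]
    rw [h1, hk, star_smul, smul_dotProduct]
    simp only [smul_eq_mul]
    exact mul_ne_zero (star_ne_zero.mpr hkne) hOv
  -- weights
  set w : Fin d → ℝ := fun i => Complex.normSq (((star U).mulVec ψI) i) with hwdef
  have hwnn : ∀ i, 0 ≤ w i := fun i => Complex.normSq_nonneg _
  have hw0 : 0 < w i₀ := by
    rw [hwdef]
    exact Complex.normSq_pos.mpr hci0
  -- numerator and denominator formulas
  have hden : ∀ t : ℝ,
      star ψI ⬝ᵥ (NormedSpace.exp ((-(2 * t) : ℂ) • H)).mulVec ψI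
        = ((∑ i, Real.exp (-(2 * t) * lam i) * w i : ℝ) : ℂ) := by
    intro t
    rw [hexp t, hquad]
  have hnum : ∀ t : ℝ,
      star ψI ⬝ᵥ (H * NormedSpace.exp ((-(2 * t) : ℂ) • H)).mulVec ψI
        = ((∑ i, (lam i * Real.exp (-(2 * t) * lam i)) * w i : ℝ) : ℂ) := by
    intro t
    rw [hHexp t, hquad]
  have hpos : ∀ t : ℝ, 0 < ∑ i, Real.exp (-(2 * t) * lam i) * w i := fun t =>
    Finset.sum_pos' (fun i _ => mul_nonneg (Real.exp_pos _).le (hwnn i))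
      ⟨i₀, Finset.mem_univ _, mul_pos (Real.exp_pos _) hw0⟩
  -- limits
  set W : ℝ := ∑ i, (if lam i = E₀ then w i else 0) with hWdef
  have hW : 0 < W := by
    rw [hWdef]
    refine Finset.sum_pos' (fun i _ => ?_) ⟨i₀, Finset.mem_univ _, ?_⟩
    · split <;> simp [hwnn i]
    · rw [if_pos hE0]
      exact hw0
  have hterm : ∀ i, Filter.Tendsto (fun t : ℝ => Real.exp (-(2 * t) * (lam i - E₀)) * w i)
      Filter.atTop (nhds (if lam i = E₀ then w i else 0)) := by
    intro i
    rcases eq_or_ne (lam i) E₀ with h | h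
    · rw [if_pos h]
      have heq : (fun t : ℝ => Real.exp (-(2 * t) * (lam i - E₀)) * w i) = fun _ => w i := by
        funext t
        rw [h]
        simp
      rw [heq]
      exact tendsto_const_nhds
    · rw [if_neg h]
      have hδ : 0 < lam i - E₀ := sub_pos.mpr (lt_of_le_of_ne (hge i) (Ne.symm h))
      have h2 : Filter.Tendsto (fun t : ℝ => (2 * (lam i - E₀)) * t) Filter.atTop Filter.atTop :=
        Filter.Tendsto.const_mul_atTop (by linarith) Filter.tendsto_id
      have h1 := Filter.tendsto_neg_atTop_atBot.comp h2
      have h1' : Filter.Tendsto (fun t : ℝ => -(2 * t) * (lam i - E₀)) Filter.atTop Filter.atBot :=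
        Filter.Tendsto.congr (fun t => by simp only [Function.comp_apply]; ring) h1
      have h3 := (Real.tendsto_exp_atBot.comp h1').mul_const (w i)
      simpa using h3
  have hT0 : Filter.Tendsto (fun t : ℝ => ∑ i, Real.exp (-(2 * t) * (lam i - E₀)) * w i)
      Filter.atTop (nhds W) := by
    rw [hWdef]
    exact tendsto_finset_sum Finset.univ (fun i _ => hterm i)
  have hT1 : Filter.Tendsto (fun t : ℝ => ∑ i, lam i * (Real.exp (-(2 * t) * (lam i - E₀)) * w i))
      Filter.atTop (nhds (E₀ * W)) := by
    have h := tendsto_finset_sum Finset.univ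
      (fun i (_ : i ∈ Finset.univ) => (hterm i).const_mul (lam i))
    have heq : (∑ i, lam i * (if lam i = E₀ then w i else 0)) = E₀ * W := by
      rw [hWdef, Finset.mul_sum]
      refine Finset.sum_congr rfl fun i _ => ?_
      split_ifs with hc
      · rw [hc]
      · simp
    rwa [heq] at h
  have hreal : Filter.Tendsto (fun t : ℝ =>
      (∑ i, lam i * (Real.exp (-(2 * t) * (lam i - E₀)) * w i))
        / (∑ i, Real.exp (-(2 * t) * (lam i - E₀)) * w i)) Filter.atTop (nhds E₀) := by
    have h := hT1.div hT0 hW.ne'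
    rwa [mul_div_assoc, div_self hW.ne', mul_one] at h
  constructor
  · have hc := (Complex.continuous_ofReal.tendsto E₀).comp hreal
    refine Filter.Tendsto.congr (fun t => ?_) hc
    have hS0 : (∑ i, Real.exp (-(2 * t) * lam i) * w i)
        = Real.exp (-(2 * t) * E₀) * ∑ i, Real.exp (-(2 * t) * (lam i - E₀)) * w i := by
      rw [Finset.mul_sum]
      refine Finset.sum_congr rfl fun i _ => ?_
      rw [show -(2 * t) * lam i = -(2 * t) * E₀ + -(2 * t) * (lam i - E₀) by ring, Real.exp_add]
      ring
    have hS1 : (∑ i, (lam i * Real.exp (-(2 * t) * lam i)) * w i)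
        = Real.exp (-(2 * t) * E₀) * ∑ i, lam i * (Real.exp (-(2 * t) * (lam i - E₀)) * w i) := by
      rw [Finset.mul_sum]
      refine Finset.sum_congr rfl fun i _ => ?_
      rw [show -(2 * t) * lam i = -(2 * t) * E₀ + -(2 * t) * (lam i - E₀) by ring, Real.exp_add]
      ring
    have hratio : (∑ i, lam i * (Real.exp (-(2 * t) * (lam i - E₀)) * w i))
          / (∑ i, Real.exp (-(2 * t) * (lam i - E₀)) * w i)
        = (∑ i, (lam i * Real.exp (-(2 * t) * lam i)) * w i)
          / (∑ i, Real.exp (-(2 * t) * lam i) * w i) := by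
      rw [hS0, hS1, mul_div_mul_left _ _ (Real.exp_ne_zero _)]
    show ((((∑ i, lam i * (Real.exp (-(2 * t) * (lam i - E₀)) * w i))
          / (∑ i, Real.exp (-(2 * t) * (lam i - E₀)) * w i) : ℝ)) : ℂ) = _
    rw [hratio, Complex.ofReal_div, ← hnum t, ← hden t]
  · intro t
    rw [hden t]
    exact ⟨by rw [Complex.ofReal_re]; exact hpos t, Complex.ofReal_im _⟩
end

section
/- Let v be a Hermitian d×d complex matrix and let λ ≥ 0 be a real number. Then the Hubbard–Stratonovich identity holds: ∫_ℝ (2π)^{−1/2} e^{−x²/2} · exp(i√λ · x · v) dx = exp(−(λ/2) · v²), where exp denotes the matrix exponential, v² the matrix square, and the integral is the Bochner integral of a matrix-valued function of the real variable x (which is integrable, since exp(i√λ x v) is unitary for every real x). -/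
open Matrix

attribute [local instance] Matrix.normedAddCommGroup Matrix.normedSpace

open MeasureTheory Complex

lemma gauss_smul_eq (t : ℝ) (x : ℝ) :
    ((2 * Real.pi) ^ (-(1:ℝ)/2) * Real.exp (-x^2/2)) • Complex.exp (Complex.I * t * x)
      = ((2 * Real.pi) ^ (-(1:ℝ)/2) : ℝ) •
        Complex.exp (-(1/2 : ℂ) * (x:ℂ)^2 + (Complex.I * t) * (x:ℂ) + 0) := by
  rw [mul_smul]
  congr 1
  rw [Complex.real_smul, Complex.ofReal_exp, ← Complex.exp_add]
  congr 1
  push_cast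
  ring

lemma gauss_int (t : ℝ) :
    Integrable fun x : ℝ =>
      ((2 * Real.pi) ^ (-(1:ℝ)/2) * Real.exp (-x^2/2)) • Complex.exp (Complex.I * t * x) := by
  simp only [gauss_smul_eq t]
  exact (integrable_cexp_quadratic (b := 1/2) (by norm_num) (Complex.I * t) 0).smul ((2 * Real.pi) ^ (-(1:ℝ)/2) : ℝ)

lemma gauss_key (t : ℝ) :
    (∫ x : ℝ, ((2 * Real.pi) ^ (-(1:ℝ)/2) * Real.exp (-x^2/2)) • Complex.exp (Complex.I * t * x))
      = Complex.exp (-(t:ℂ)^2/2) := by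
  simp only [gauss_smul_eq t]
  rw [integral_smul]
  have h2 : ∀ x : ℝ, Complex.exp (-(1/2:ℂ) * (x:ℂ)^2 + (Complex.I * t) * (x:ℂ) + 0)
      = Complex.exp (Complex.I * (t:ℂ) * (x:ℂ)) * Complex.exp (-(1/2:ℂ) * (x:ℂ)^2) := by
    intro x; rw [← Complex.exp_add]; ring_nf
  simp only [h2]
  rw [fourierIntegral_gaussian (by norm_num : (0:ℝ) < (1/2:ℂ).re) (t:ℂ)]
  have hπ : ((Real.pi : ℂ) / (1/2 : ℂ)) = ((2 * Real.pi : ℝ) : ℂ) := by push_cast; ring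
  rw [hπ, Complex.real_smul, Complex.ofReal_cpow (by positivity), ← mul_assoc,
      ← Complex.cpow_add _ _ (by push_cast [Real.pi_ne_zero]; norm_num [Real.pi_ne_zero])]
  have he : ((-(1:ℝ)/2 : ℝ) : ℂ) + (1/2 : ℂ) = 0 := by push_cast; ring
  rw [he, Complex.cpow_zero, one_mul]
  norm_num


/-- The Hubbard–Stratonovich identity: for a Hermitian matrix `v` and `λ ≥ 0`,
`∫ (2π)^{-1/2} e^{-x²/2} exp(i√λ x v) dx = exp(-(λ/2) v²)`. -/
theorem hubbard_stratonovich
    (d : ℕ) (v : Matrix (Fin d) (Fin d) ℂ) (hv : v.IsHermitian)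
    (lam : ℝ) (hlam : 0 ≤ lam) :
    ∫ x : ℝ, ((2 * Real.pi) ^ (-(1 : ℝ) / 2) * Real.exp (-x ^ 2 / 2)) •
        NormedSpace.exp ((Complex.I * (Real.sqrt lam : ℂ) * (x : ℂ)) • v) =
      NormedSpace.exp ((-(lam / 2) : ℂ) • (v * v)) := by
  classical
  set c : ℝ := Real.sqrt lam with hc
  set U : Matrix (Fin d) (Fin d) ℂ := (hv.eigenvectorUnitary : Matrix (Fin d) (Fin d) ℂ) with hU
  set μ : Fin d → ℝ := hv.eigenvalues with hμ
  have hUs : star U * U = 1 := Matrix.UnitaryGroup.star_mul_self hv.eigenvectorUnitary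
  have hsU : U * star U = 1 := by
    have h := congrArg (fun M => U * M * star U) hUs
    simpa [mul_assoc] using mul_eq_one_comm.mp hUs
  have hUunit : IsUnit U := ⟨⟨U, star U, hsU, hUs⟩, rfl⟩
  have hUinv : U⁻¹ = star U := Matrix.inv_eq_left_inv hUs
  set D : Matrix (Fin d) (Fin d) ℂ := Matrix.diagonal (fun j => (μ j : ℂ)) with hD
  have hspec : v = U * D * star U := by
    have h := hv.spectral_theorem
    rw [Unitary.conjStarAlgAut_apply] at h
    exact h
  -- the continuous linear map  f ↦ U * diagonal f * star U
  set LD : (Fin d → ℂ) →L[ℂ] Matrix (Fin d) (Fin d) ℂ :=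
    LinearMap.toContinuousLinearMap
      (((LinearMap.mulLeft ℂ U).comp (LinearMap.mulRight ℂ (star U))).comp
        (Matrix.diagonalLinearMap (Fin d) ℂ ℂ)) with hLD
  have hLDapp : ∀ f : Fin d → ℂ, LD f = U * Matrix.diagonal f * star U := by
    intro f
    simp [hLD, LinearMap.mulLeft, LinearMap.mulRight, Matrix.diagonalLinearMap, mul_assoc]
  set t : Fin d → ℝ := fun j => c * μ j with ht
  set g : ℝ → (Fin d → ℂ) := fun x j =>
    ((2 * Real.pi) ^ (-(1:ℝ)/2) * Real.exp (-x^2/2)) • Complex.exp (Complex.I * (t j) * x)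
    with hg
  have hFx : ∀ x : ℝ,
      ((2 * Real.pi) ^ (-(1 : ℝ) / 2) * Real.exp (-x ^ 2 / 2)) •
        NormedSpace.exp ((Complex.I * (c : ℂ) * (x : ℂ)) • v) = LD (g x) := by
    intro x
    have h1 : (Complex.I * (c:ℂ) * (x:ℂ)) • v
        = U * ((Complex.I * c * x) • D) * U⁻¹ := by
      rw [hspec, hUinv, Matrix.mul_smul, Matrix.smul_mul]
    rw [h1, Matrix.exp_conj _ _ hUunit]
    have h2 : (Complex.I * (c:ℂ) * (x:ℂ)) • D
        = Matrix.diagonal (fun j => Complex.I * c * x * (μ j : ℂ)) := by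
      rw [hD, ← Matrix.diagonal_smul]
      congr 1
      try funext j
      try exact smul_eq_mul _ _
    rw [h2, Matrix.exp_diagonal, hUinv, ← Matrix.smul_mul, ← Matrix.mul_smul,
        ← Matrix.diagonal_smul, hLDapp]
    have h3 : (((2 * Real.pi) ^ (-(1:ℝ)/2) * Real.exp (-x^2/2)) •
        NormedSpace.exp fun j => Complex.I * (c:ℂ) * (x:ℂ) * (μ j : ℂ)) = g x := by
      funext j
      rw [Pi.smul_apply, Pi.coe_exp]
      simp only [hg]
      rw [← Complex.exp_eq_exp_ℂ]
      have harg : (Complex.I * (c:ℂ) * (x:ℂ) * ((μ j : ℝ):ℂ)) = Complex.I * ((t j : ℝ):ℂ) * (x:ℂ) := by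
        simp only [ht]
        push_cast
        ring
      rw [harg]
    rw [h3]
  simp only [hFx]
  -- integrability of g
  have hgsum : g = fun x => ∑ j : Fin d, (g x j) • (Pi.single j 1 : Fin d → ℂ) := by
    funext x j'
    rw [Finset.sum_apply]
    simp [Pi.single_apply, Finset.sum_ite_eq, Finset.sum_ite_eq']
  have hgint : Integrable g := by
    rw [hgsum]
    exact integrable_finset_sum _ (fun j _ => ((gauss_int (t j)).smul_const _))
  erw [ContinuousLinearMap.integral_comp_comm LD hgint]
  have hval : (∫ x, g x) = fun j => Complex.exp (-((t j : ℝ) : ℂ)^2/2) := by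
    funext j
    have := (ContinuousLinearMap.proj (R := ℂ) (φ := fun _ : Fin d => ℂ) j).integral_comp_comm hgint
    simpa using this.symm.trans (gauss_key (t j))
  rw [hval]
  -- right-hand side
  have hvv : v * v = U * (D * D) * star U := by
    rw [hspec]
    calc U * D * star U * (U * D * star U)
        = U * D * (star U * U) * D * star U := by simp only [mul_assoc]
      _ = U * (D * D) * star U := by rw [hUs]; simp only [mul_one, mul_assoc]
  have hc2 : ((c : ℂ))^2 = (lam : ℂ) := by
    rw [← Complex.ofReal_pow, Real.sq_sqrt hlam]
  have hRHS : NormedSpace.exp ((-(lam / 2) : ℂ) • (v * v))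
      = LD (fun j => Complex.exp (-((t j : ℝ) : ℂ)^2/2)) := by
    rw [hvv]
    have h1 : (-(lam / 2 : ℂ)) • (U * (D * D) * star U)
        = U * ((-(lam / 2 : ℂ)) • (D * D)) * U⁻¹ := by
      rw [hUinv, Matrix.mul_smul, Matrix.smul_mul]
    rw [h1, Matrix.exp_conj _ _ hUunit]
    have h2 : (-(lam / 2 : ℂ)) • (D * D)
        = Matrix.diagonal (fun j => -(lam / 2 : ℂ) * ((μ j : ℂ) * (μ j : ℂ))) := by
      rw [hD, Matrix.diagonal_mul_diagonal, ← Matrix.diagonal_smul]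
      congr 1
      try funext j
      try exact smul_eq_mul _ _
    rw [h2, Matrix.exp_diagonal, hUinv, hLDapp]
    have h3 : (NormedSpace.exp fun j => -((lam:ℂ)/2) * ((μ j : ℂ) * (μ j : ℂ)))
        = fun j => Complex.exp (-((t j : ℝ) : ℂ)^2/2) := by
      funext j
      rw [Pi.coe_exp, ← Complex.exp_eq_exp_ℂ]
      have htj : (-((t j : ℝ) : ℂ)^2/2) = -((lam:ℂ)/2) * ((μ j : ℂ) * (μ j : ℂ)) := by
        have h4 : ((t j : ℝ) : ℂ) = (c : ℂ) * ((μ j : ℝ) : ℂ) := by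
          simp only [ht]; push_cast; ring
        rw [h4, mul_pow, hc2]
        ring
      rw [htj]
    rw [h3]
  rw [hRHS]
  rfl
end
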